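/- Let X_M be a source on a weighted graph G = (M, w) with fundamental partition P* (the finest partition attaining the minimum of I_P(X_M)). If the set Γ of capacity-preserving fractional packings equals {w}, then P* is the singleton partition. Equivalently: if P* is not the singleton partition, there exists a fractional packing x ≤ w with x ≠ w such that the multivariate mutual information of the source with weights x equals that of the source with weights w. -/

import Mathlib

set_option maxHeartbeats 1000000


open Finset
open scoped Classical

/-- `I_P(x) = (1/(|P|-1)) ∑_{e ∈ E_P} x e`, `E_P` = edges crossing the partition `P`. -/
noncomputable def IP {M : Type*} [Fintype M] [DecidableEq M] (x : Finset M → ℝ)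
    (P : Finpartition (Finset.univ : Finset M)) : ℝ :=
  ((P.parts.card : ℝ) - 1)⁻¹ *
    ∑ e ∈ Finset.univ.filter (fun e : Finset M => ¬ ∃ A ∈ P.parts, e ⊆ A), x e

/-- Multivariate mutual information `I(x) = min_{|P| ≥ 2} I_P(x)`. -/
noncomputable def MMI {M : Type*} [Fintype M] [DecidableEq M] (x : Finset M → ℝ) : ℝ :=
  sInf {r : ℝ | ∃ P : Finpartition (Finset.univ : Finset M), 2 ≤ P.parts.card ∧ r = IP x P}

/-- Split a finset `A` with `a ∈ A`, `2 ≤ A.card` into the two parts `{a}` and `A.erase a`. -/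
noncomputable def splitPart {M : Type*} [DecidableEq M] (A : Finset M) (a : M) (ha : a ∈ A)
    (h2 : 2 ≤ A.card) : Finpartition A where
  parts := {{a}, A.erase a}
  supIndep := by
    rw [Finset.supIndep_iff_pairwiseDisjoint]
    intro x hx y hy hxy
    simp only [coe_insert, coe_singleton, Set.mem_insert_iff, Set.mem_singleton_iff] at hx hy
    rcases hx with rfl | rfl <;> rcases hy with rfl | rfl
    · exact absurd rfl hxy
    · exact Finset.disjoint_singleton_left.2 (Finset.notMem_erase a A)
    · exact (Finset.disjoint_singleton_right.2 (Finset.notMem_erase a A))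
    · exact absurd rfl hxy
  sup_parts := by
    simp only [Finset.sup_insert, Finset.sup_singleton, id]
    rw [sup_eq_union]
    ext x
    simp only [Finset.mem_union, Finset.mem_singleton, Finset.mem_erase]
    constructor
    · rintro (rfl | ⟨-, hx⟩)
      · exact ha
      · exact hx
    · intro hx
      by_cases h : x = a
      · exact Or.inl h
      · exact Or.inr ⟨h, hx⟩
  bot_notMem := by
    simp only [Finset.mem_insert, Finset.mem_singleton]
    rintro (h | h)
    · exact (Finset.singleton_nonempty a).ne_empty h.symm
    · have : (A.erase a).Nonempty := by
        rw [← Finset.card_pos, Finset.card_erase_of_mem ha]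
        omega
      exact this.ne_empty h.symm

lemma splitPart_parts_card {M : Type*} [DecidableEq M] (A : Finset M) (a : M) (ha : a ∈ A)
    (h2 : 2 ≤ A.card) : (splitPart A a ha h2).parts.card = 2 := by
  have hne : ({a} : Finset M) ≠ A.erase a := by
    intro h
    exact Finset.notMem_erase a A (h ▸ Finset.mem_singleton_self a)
  rw [splitPart]
  rw [Finset.card_insert_of_notMem (by simpa using hne), Finset.card_singleton]

/-- **Lemma 2.** Let `X_M` be a graphical source with fundamental partition
`P*` (minimizer of `I_P`, finest among minimizers). If `P*` is not the singleton partition,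
then there is a fractional packing `x ≤ w` with `x ≠ w` preserving the multivariate mutual
information; equivalently, `Γ = {w}` only if `P*` is the singleton partition. -/
theorem Gamma_singleton_only_if_typeS {M : Type*} [Fintype M] [DecidableEq M]
    (hm : 2 ≤ Fintype.card M)
    (w : Finset M → ℝ) (hw : ∀ e, 0 ≤ w e)
    (h2 : ∀ e, 0 < w e → e.card = 2)
    (Pstar : Finpartition (Finset.univ : Finset M)) (hcard : 2 ≤ Pstar.parts.card)
    (hmin : ∀ Q : Finpartition (Finset.univ : Finset M),
      2 ≤ Q.parts.card → IP w Pstar ≤ IP w Q)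
    (hfinest : ∀ Q : Finpartition (Finset.univ : Finset M),
      2 ≤ Q.parts.card → IP w Q = IP w Pstar → Pstar ≤ Q)
    (hnotS : ¬ ∀ A ∈ Pstar.parts, A.card = 1) :
    ∃ x : Finset M → ℝ, (∀ e, 0 ≤ x e) ∧ (∀ e, x e ≤ w e) ∧ x ≠ w ∧ MMI x = MMI w := by
  classical
  -- `MMI w = IP w Pstar`
  have hleast_w : IsLeast {r : ℝ | ∃ P : Finpartition (Finset.univ : Finset M),
      2 ≤ P.parts.card ∧ r = IP w P} (IP w Pstar) := by
    constructor
    · exact ⟨Pstar, hcard, rfl⟩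
    · rintro r ⟨Q, hQ, rfl⟩
      exact hmin Q hQ
  have hMw : MMI w = IP w Pstar := hleast_w.csInf_eq
  -- a part `A` of `Pstar` with at least two elements
  push_neg at hnotS
  obtain ⟨A, hA, hA1⟩ := hnotS
  have hAne : A.Nonempty := Pstar.nonempty_of_mem_parts hA
  have hA2 : 2 ≤ A.card := by
    have := hAne.card_pos
    omega
  obtain ⟨a, ha⟩ := hAne
  -- Step 1: there is an edge of positive weight inside some part of `Pstar`.
  have hstep : ∃ e0 : Finset M, 0 < w e0 ∧ ∃ B ∈ Pstar.parts, e0 ⊆ B := by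
    by_contra hcon
    push_neg at hcon
    -- then all `w`-weight inside parts is zero
    have hzero : ∀ e : Finset M, (∃ B ∈ Pstar.parts, e ⊆ B) → w e = 0 := by
      intro e he
      by_contra hne
      have hpos : 0 < w e := lt_of_le_of_ne (hw e) (Ne.symm hne)
      obtain ⟨B, hB, heB⟩ := he
      exact hcon e hpos B hB heB
    -- refine `Pstar` by splitting `A` into `{a}` and `A.erase a`
    set Qf : ∀ B ∈ Pstar.parts, Finpartition B := fun B hB =>
      if h : B = A then (splitPart A a ha hA2).copy h.symm
      else Finpartition.indiscrete (Pstar.ne_bot hB) with hQf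
    set Q : Finpartition (Finset.univ : Finset M) := Pstar.bind Qf with hQdef
    have hcardQ : Q.parts.card = Pstar.parts.card + 1 := by
      rw [hQdef, Finpartition.card_bind]
      have hterm : ∀ B : {x // x ∈ Pstar.parts},
          (Qf B.1 B.2).parts.card = if B.1 = A then 2 else 1 := by
        rintro ⟨B, hB⟩
        by_cases h : B = A
        · simp only [hQf, dif_pos h, Finpartition.copy_parts, if_pos h]
          exact splitPart_parts_card A a ha hA2
        · simp [hQf, dif_neg h, if_neg h]
      calc ∑ B ∈ Pstar.parts.attach, (Qf B.1 B.2).parts.card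
          = ∑ B ∈ Pstar.parts.attach, (if B.1 = A then 2 else 1) :=
            Finset.sum_congr rfl fun B _ => hterm B
        _ = ∑ B ∈ Pstar.parts, (if B = A then 2 else 1) :=
            Finset.sum_attach Pstar.parts (fun B => if B = A then 2 else 1)
        _ = ∑ B ∈ Pstar.parts, ((if B = A then 1 else 0) + 1) := by
            refine Finset.sum_congr rfl fun B _ => ?_
            split <;> rfl
        _ = (∑ B ∈ Pstar.parts, (if B = A then 1 else 0)) + Pstar.parts.card := by
            rw [Finset.sum_add_distrib, Finset.sum_const, smul_eq_mul, mul_one]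
        _ = Pstar.parts.card + 1 := by
            rw [Finset.sum_ite_eq' Pstar.parts A (fun _ => 1), if_pos hA]
            omega
    have hQ2 : 2 ≤ Q.parts.card := by omega
    -- `Q ≤ Pstar`
    have hQle : Q ≤ Pstar := by
      intro b hb
      rw [hQdef, Finpartition.mem_bind] at hb
      obtain ⟨B, hB, hb⟩ := hb
      exact ⟨B, hB, (Qf B hB).le hb⟩
    -- edges crossing `Pstar` cross `Q`
    have hsub : (Finset.univ.filter (fun e : Finset M => ¬ ∃ C ∈ Pstar.parts, e ⊆ C)) ⊆
        (Finset.univ.filter (fun e : Finset M => ¬ ∃ C ∈ Q.parts, e ⊆ C)) := by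
      intro e he
      simp only [Finset.mem_filter, Finset.mem_univ, true_and] at he ⊢
      intro hcontra
      obtain ⟨C, hC, heC⟩ := hcontra
      obtain ⟨D, hD, hCD⟩ := hQle hC
      exact he ⟨D, hD, heC.trans hCD⟩
    -- the crossing weight sums agree
    have hsum : ∑ e ∈ Finset.univ.filter (fun e : Finset M => ¬ ∃ C ∈ Q.parts, e ⊆ C), w e =
        ∑ e ∈ Finset.univ.filter (fun e : Finset M => ¬ ∃ C ∈ Pstar.parts, e ⊆ C), w e := by
      refine (Finset.sum_subset hsub ?_).symm
      intro e _ heP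
      simp only [Finset.mem_filter, Finset.mem_univ, true_and, not_not] at heP
      exact hzero e heP
    set S : ℝ := ∑ e ∈ Finset.univ.filter (fun e : Finset M => ¬ ∃ C ∈ Pstar.parts, e ⊆ C), w e
      with hSdef
    have hS0 : 0 ≤ S := Finset.sum_nonneg fun e _ => hw e
    set nR : ℝ := (Pstar.parts.card : ℝ) with hnR
    have hn2 : (2 : ℝ) ≤ nR := by rw [hnR]; exact_mod_cast hcard
    have hIPstar : IP w Pstar = (nR - 1)⁻¹ * S := rfl
    have hIQ : IP w Q = nR⁻¹ * S := by
      rw [IP, hsum, hcardQ]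
      push_cast
      ring_nf
      rw [hnR]; ring
    have hineq := hmin Q hQ2
    rw [hIPstar, hIQ] at hineq
    have hinv : nR⁻¹ < (nR - 1)⁻¹ := by
      apply inv_strictAnti₀ (by linarith) (by linarith)
    have hSz : S = 0 := by
      by_contra hS
      have hSpos : 0 < S := lt_of_le_of_ne hS0 (Ne.symm hS)
      nlinarith [mul_lt_mul_of_pos_right hinv hSpos]
    -- then both values are zero, so `Pstar ≤ Q`, contradiction
    have heq : IP w Q = IP w Pstar := by rw [hIPstar, hIQ, hSz]; ring
    obtain ⟨C, hC, hAC⟩ := hfinest Q hQ2 heq hA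
    rw [hQdef, Finpartition.mem_bind] at hC
    obtain ⟨B, hB, hC⟩ := hC
    by_cases h : B = A
    · simp only [hQf, dif_pos h, Finpartition.copy_parts, splitPart, Finset.mem_insert,
        Finset.mem_singleton] at hC
      rcases hC with rfl | rfl
      · have := Finset.card_le_card hAC
        simp at this
        omega
      · exact Finset.notMem_erase a A (hAC ha)
    · simp only [hQf, dif_neg h, Finpartition.indiscrete_parts, Finset.mem_singleton] at hC
      subst hC
      have hdisj : Disjoint A C := Pstar.disjoint hA hB (fun hh => h hh.symm)
      have : A = ∅ := Disjoint.eq_bot_of_le hdisj hAC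
      exact (Finset.singleton_nonempty a).ne_empty (by
        rw [← Finset.singleton_subset_iff] at ha
        exact Finset.subset_empty.mp (this ▸ ha) ▸ rfl)
  -- Now use the internal positive-weight edge `e0`.
  obtain ⟨e0, he0pos, B0, hB0, he0B⟩ := hstep
  have hnotcrossP : ∃ C ∈ Pstar.parts, e0 ⊆ C := ⟨B0, hB0, he0B⟩
  -- any partition crossed by `e0` has strictly larger `IP w`
  have hkey : ∀ Q : Finpartition (Finset.univ : Finset M), 2 ≤ Q.parts.card →
      (¬ ∃ C ∈ Q.parts, e0 ⊆ C) → IP w Pstar < IP w Q := by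
    intro Q hQ2 hcross
    rcases lt_or_eq_of_le (hmin Q hQ2) with h | h
    · exact h
    · exfalso
      obtain ⟨C, hC, hBC⟩ := hfinest Q hQ2 h.symm hB0
      exact hcross ⟨C, hC, he0B.trans hBC⟩
  -- the finite set of partitions crossed by `e0`
  set T : Finset (Finpartition (Finset.univ : Finset M)) :=
    Finset.univ.filter (fun Q => 2 ≤ Q.parts.card ∧ ¬ ∃ C ∈ Q.parts, e0 ⊆ C) with hT
  set f : Finpartition (Finset.univ : Finset M) → ℝ :=
    fun Q => (IP w Q - IP w Pstar) * ((Q.parts.card : ℝ) - 1) with hf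
  have hfpos : ∀ Q ∈ T, 0 < f Q := by
    intro Q hQ
    rw [hT, Finset.mem_filter] at hQ
    obtain ⟨-, hQ2, hcross⟩ := hQ
    have h1 : 0 < IP w Q - IP w Pstar := by linarith [hkey Q hQ2 hcross]
    have h2' : (0 : ℝ) < (Q.parts.card : ℝ) - 1 := by
      have : (2 : ℝ) ≤ (Q.parts.card : ℝ) := by exact_mod_cast hQ2
      linarith
    exact mul_pos h1 h2'
  set ε : ℝ := if h : T.Nonempty then min (w e0) (T.inf' h f) else w e0 with hε
  have hεpos : 0 < ε := by
    rw [hε]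
    split
    · rename_i h
      apply lt_min he0pos
      rw [Finset.lt_inf'_iff]
      exact fun Q hQ => hfpos Q hQ
    · exact he0pos
  have hεle : ε ≤ w e0 := by
    rw [hε]; split
    · exact min_le_left _ _
    · exact le_refl _
  have hεf : ∀ Q ∈ T, ε ≤ f Q := by
    intro Q hQ
    rw [hε]
    split
    · exact le_trans (min_le_right _ _) (Finset.inf'_le f hQ)
    · rename_i h
      exact absurd ⟨Q, hQ⟩ h
  -- the perturbed weight function
  set x : Finset M → ℝ := fun e => if e = e0 then w e0 - ε else w e with hx
  -- sums over edge sets not containing e0 are unchanged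
  have hsum_eq : ∀ (s : Finset (Finset M)), e0 ∉ s → ∑ e ∈ s, x e = ∑ e ∈ s, w e := by
    intro s hs
    refine Finset.sum_congr rfl fun e he => ?_
    rw [hx]
    simp only
    rw [if_neg]
    rintro rfl
    exact hs he
  refine ⟨x, ?_, ?_, ?_, ?_⟩
  · intro e
    rw [hx]; simp only
    split
    · linarith
    · exact hw e
  · intro e
    rw [hx]; simp only
    split
    · rename_i h; rw [h]; linarith
    · exact le_refl _
  · intro h
    have := congrFun h e0
    rw [hx] at this
    simp only [if_true, if_pos] at this
    linarith
  · -- `MMI x = MMI w`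
    have he0P : e0 ∉ Finset.univ.filter (fun e : Finset M => ¬ ∃ C ∈ Pstar.parts, e ⊆ C) := by
      simp only [Finset.mem_filter, Finset.mem_univ, true_and, not_not]
      exact hnotcrossP
    have hxP : IP x Pstar = IP w Pstar := by
      rw [IP, IP, hsum_eq _ he0P]
    have hleast_x : IsLeast {r : ℝ | ∃ P : Finpartition (Finset.univ : Finset M),
        2 ≤ P.parts.card ∧ r = IP x P} (IP w Pstar) := by
      constructor
      · exact ⟨Pstar, hcard, hxP.symm⟩
      · rintro r ⟨Q, hQ2, rfl⟩
        by_cases hcross : ∃ C ∈ Q.parts, e0 ⊆ C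
        · -- `e0` doesn't cross `Q`: value unchanged
          have he0Q : e0 ∉ Finset.univ.filter (fun e : Finset M => ¬ ∃ C ∈ Q.parts, e ⊆ C) := by
            simp only [Finset.mem_filter, Finset.mem_univ, true_and, not_not]
            exact hcross
          have hxQw : IP x Q = IP w Q := by rw [IP, IP, hsum_eq _ he0Q]
          rw [hxQw]
          exact hmin Q hQ2
        · -- `e0` crosses `Q`
          have hQT : Q ∈ T := by
            rw [hT, Finset.mem_filter]
            exact ⟨Finset.mem_univ _, hQ2, hcross⟩
          set EQ := Finset.univ.filter (fun e : Finset M => ¬ ∃ C ∈ Q.parts, e ⊆ C) with hEQ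
          have he0Q : e0 ∈ EQ := by
            rw [hEQ]
            simp only [Finset.mem_filter, Finset.mem_univ, true_and]
            exact hcross
          have hsx : ∑ e ∈ EQ, x e = (∑ e ∈ EQ, w e) - ε := by
            have hstep1 : ∀ e ∈ EQ, x e = w e - (if e = e0 then ε else 0) := by
              intro e _
              rw [hx]
              by_cases h : e = e0
              · subst h; simp
              · simp [h]
            rw [Finset.sum_congr rfl hstep1, Finset.sum_sub_distrib,
              Finset.sum_ite_eq' EQ e0 (fun _ => ε), if_pos he0Q]
          set kR : ℝ := (Q.parts.card : ℝ) with hkR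
          have hk2 : (2 : ℝ) ≤ kR := by rw [hkR]; exact_mod_cast hQ2
          have hk1 : (0 : ℝ) < kR - 1 := by linarith
          have hxQ : IP x Q = IP w Q - ε * (kR - 1)⁻¹ := by
            rw [IP, IP, ← hEQ, ← hkR, hsx]
            ring
          rw [hxQ]
          have hεfQ : ε ≤ f Q := hεf Q hQT
          have hfQ : f Q * (kR - 1)⁻¹ = IP w Q - IP w Pstar := by
            rw [hf]
            simp only
            rw [← hkR, mul_assoc, mul_inv_cancel₀ (by linarith), mul_one]
          have hmul : ε * (kR - 1)⁻¹ ≤ f Q * (kR - 1)⁻¹ :=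
            mul_le_mul_of_nonneg_right hεfQ (le_of_lt (inv_pos.mpr hk1))
          linarith [hfQ ▸ hmul]
    rw [MMI, MMI, hleast_x.csInf_eq, hleast_w.csInf_eq]
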